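/- Let Υ > 0 and let (r_n) be a sequence of measurable maps r_n : [0,T] → V with sup_n sup_{s∈[0,T]} ‖r_n(s)‖_H < ∞. Then sup_{(f,g) ∈ S̄^Υ} sup_n [ ∫₀^T ‖∫_Z γ(s,r_n(s),z)(g(s,z) − 1) ν(dz)‖_H ds + ∫₀^T ‖B(s,r_n(s))f(s)‖_H ds ] < ∞. -/

import Mathlib

open MeasureTheory Filter Topology
open scoped ENNReal

/-- The measure `λ_T ⊗ ν` on `Z_T = [0,T] × Z`. -/
noncomputable def nuT {Z : Type*} [MeasurableSpace Z] (T : ℝ) (ν : Measure Z) :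
    Measure (ℝ × Z) := (volume.restrict (Set.Icc 0 T)).prod ν

/-- The set `S^Υ` of nonnegative measurable functions `g` on `(Z_T, ν_T)` with
`∫ ℓ(g) dν_T ≤ Υ`, where `ℓ(r) = r log r − r + 1`. -/
def entS {X : Type*} [MeasurableSpace X] (μ : Measure X) (Υ : ℝ) : Set (X → ℝ) :=
  {g | Measurable g ∧ (∀ x, 0 ≤ g x) ∧
    ∫⁻ x, ENNReal.ofReal (g x * Real.log (g x) - g x + 1) ∂μ ≤ ENNReal.ofReal Υ}

/-- The class `𝓗_p` on `(Z_T, ν_T)`. -/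
def memHp {X : Type*} [MeasurableSpace X] (μ : Measure X) (p : ℝ) (h : X → ℝ) : Prop :=
  Measurable h ∧ (∀ x, 0 ≤ h x) ∧
    ∃ δ > (0:ℝ), ∀ E : Set X, MeasurableSet E → μ E < ∞ →
      ∫⁻ x in E, ENNReal.ofReal (Real.exp (δ * h x ^ p)) ∂μ < ∞

private lemma sqrt_le_ell (x : ℝ) (hx : 0 ≤ x) :
    (Real.sqrt x - 1) ^ 2 ≤ x * Real.log x - x + 1 := by
  rcases hx.eq_or_lt with h | h
  · simp [← h]
  · have hs : 0 < Real.sqrt x := Real.sqrt_pos.2 h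
    have hx2 : Real.sqrt x ^ 2 = x := Real.sq_sqrt hx
    have hlog : Real.log x = 2 * Real.log (Real.sqrt x) := by
      rw [Real.log_sqrt hx]; ring
    have h1 : 1 - (Real.sqrt x)⁻¹ ≤ Real.log (Real.sqrt x) := by
      have := Real.log_le_sub_one_of_pos (inv_pos.2 hs)
      rw [Real.log_inv] at this; linarith
    have hxs : x * (Real.sqrt x)⁻¹ = Real.sqrt x := by
      rw [← hx2]; field_simp [hs.ne']; rw [Real.sqrt_sq hs.le]
    have key : 2 * x - 2 * Real.sqrt x ≤ x * Real.log x := by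
      have h2 := mul_le_mul_of_nonneg_left h1 (by positivity : (0:ℝ) ≤ 2 * x)
      calc 2 * x - 2 * Real.sqrt x = 2 * x * (1 - (Real.sqrt x)⁻¹) := by
            rw [mul_sub, show 2 * x * (Real.sqrt x)⁻¹ = 2 * (x * (Real.sqrt x)⁻¹) by ring,
              hxs]; ring
        _ ≤ 2 * x * Real.log (Real.sqrt x) := h2
        _ = x * Real.log x := by rw [hlog]; ring
    nlinarith [key, hx2]

private lemma ell_nonneg (x : ℝ) (hx : 0 ≤ x) : 0 ≤ x * Real.log x - x + 1 :=
  le_trans (sq_nonneg _) (sqrt_le_ell x hx)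

private lemma young_ell (a x : ℝ) (ha : 0 ≤ a) (hx : 0 ≤ x) :
    a * x ≤ Real.exp a - 1 + (x * Real.log x - x + 1) := by
  rcases hx.eq_or_lt with h | h
  · simp [← h]; positivity
  · suffices hkey : x * (a + 1 - Real.log x) ≤ Real.exp a by nlinarith [hkey]
    by_cases hc : a + 1 - Real.log x ≤ 0
    · exact le_trans (mul_nonpos_of_nonneg_of_nonpos hx hc) (Real.exp_pos a).le
    · push_neg at hc
      set u := a + 1 - Real.log x with hu
      have hea : Real.exp a = x * Real.exp (u - 1) := by
        have hau : a = (u - 1) + Real.log x := by rw [hu]; ring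
        rw [hau, Real.exp_add, Real.exp_log h]; ring
      have hue : u ≤ Real.exp (u - 1) := by
        have := Real.add_one_le_exp (u - 1); linarith
      rw [hea]
      exact mul_le_mul_of_nonneg_left hue hx

private lemma exp_sub_one_le (u : ℝ) (hu : 0 ≤ u) : Real.exp u - 1 ≤ u * Real.exp u := by
  have h := Real.add_one_le_exp (-u)
  have h2 : Real.exp (-u) * Real.exp u = 1 := by rw [← Real.exp_add]; simp
  nlinarith [mul_le_mul_of_nonneg_right h (Real.exp_pos u).le, Real.exp_pos u]

set_option maxHeartbeats 800000 in
private lemma key_ineq (δ a x : ℝ) (hδ : 0 < δ) (ha : 0 ≤ a) (hx : 0 ≤ x) :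
    a * |x - 1| ≤ (1 / (2 * δ) + Real.exp (1 / (4 * δ))) * (Real.exp (δ * a ^ 2) - 1)
      + (6 * Real.exp (1 / (4 * δ)) + 3) * (x * Real.log x - x + 1) := by
  set c := Real.exp (1 / (4 * δ)) with hc
  have hc1 : 1 ≤ c := Real.one_le_exp (by positivity)
  set L := x * Real.log x - x + 1 with hL
  have hL0 : 0 ≤ L := ell_nonneg x hx
  have hLs : (Real.sqrt x - 1) ^ 2 ≤ L := sqrt_le_ell x hx
  set E := Real.exp (δ * a ^ 2) - 1 with hE
  clear_value c L E
  have hE0 : 0 ≤ E := by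
    have h1 : (1:ℝ) ≤ Real.exp (δ * a ^ 2) := Real.one_le_exp (by positivity)
    simp only [hE]; linarith
  have hs0 : 0 ≤ Real.sqrt x := Real.sqrt_nonneg x
  have hsx : Real.sqrt x ^ 2 = x := Real.sq_sqrt hx
  have hcE : 0 ≤ c * E := mul_nonneg (by linarith) hE0
  have hcL : 0 ≤ c * L := mul_nonneg (by linarith) hL0
  have e1 : (1 / (2 * δ) + c) * E = (1 / (2 * δ)) * E + c * E := by ring
  have e2 : (6 * c + 3) * L = 3 * L + 6 * (c * L) := by ring
  by_cases hx2 : x ≤ 2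
  · have habs : |x - 1| ^ 2 = (x - 1) ^ 2 := sq_abs _
    have hamgm : a * |x - 1| ≤ (a ^ 2 + (x - 1) ^ 2) / 2 := by
      nlinarith [sq_nonneg (a - |x - 1|), habs]
    have ha2 : δ * a ^ 2 ≤ E := by
      have := Real.add_one_le_exp (δ * a ^ 2); simp only [hE]; linarith
    have hD0 : (0:ℝ) ≤ 1 / (2 * δ) := by positivity
    have hDδ : (1 / (2 * δ)) * δ = 1 / 2 := by field_simp
    have hDE : a ^ 2 / 2 ≤ (1 / (2 * δ)) * E := by
      have h3 := mul_le_mul_of_nonneg_left ha2 hD0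
      have h4 : (1 / (2 * δ)) * (δ * a ^ 2) = a ^ 2 / 2 := by
        rw [← mul_assoc, hDδ]; ring
      linarith
    have h6 : (x - 1) ^ 2 ≤ 6 * L := by
      have h5 : (Real.sqrt x + 1) ^ 2 ≤ 6 := by
        nlinarith [sq_nonneg (Real.sqrt x - 3/2)]
      have hprod : (x - 1) ^ 2 = (Real.sqrt x - 1) ^ 2 * (Real.sqrt x + 1) ^ 2 := by
        nlinarith [hsx]
      rw [hprod]
      calc (Real.sqrt x - 1) ^ 2 * (Real.sqrt x + 1) ^ 2
          ≤ L * 6 := mul_le_mul hLs h5 (sq_nonneg _) hL0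
        _ = 6 * L := by ring
    linarith [hamgm, hDE, h6, e1, e2, hcE, hcL]
  · push_neg at hx2
    have habs : |x - 1| = x - 1 := abs_of_nonneg (by linarith)
    have hax : a * x ≤ Real.exp a - 1 + L := by rw [hL]; exact young_ell a x ha hx
    have haq : a ≤ 1 / (4 * δ) + δ * a ^ 2 := by
      have h' : 4 * δ * a ≤ 1 + 4 * δ ^ 2 * a ^ 2 := by
        nlinarith [sq_nonneg (2 * δ * a - 1)]
      rw [← sub_nonneg]
      have expand : 1 / (4 * δ) + δ * a ^ 2 - a
          = (1 + 4 * δ ^ 2 * a ^ 2 - 4 * δ * a) / (4 * δ) := by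
        field_simp
      rw [expand]
      exact div_nonneg (by linarith) (by positivity)
    have hexpa : Real.exp a ≤ c * Real.exp (δ * a ^ 2) := by
      rw [hc, ← Real.exp_add]
      exact Real.exp_le_exp.2 haq
    have hL6 : 1 / 6 ≤ L := by
      have hs2 : (141/100 : ℝ) ≤ Real.sqrt x := by nlinarith [hsx, hs0]
      nlinarith [hLs, sq_nonneg (Real.sqrt x - 141/100)]
    have hcEe : Real.exp a - 1 ≤ c * E + (c - 1) := by
      have he : c * E = c * Real.exp (δ * a ^ 2) - c := by simp only [hE]; ring
      linarith
    have hc6 : c - 1 ≤ 6 * (c - 1) * L := by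
      have h7 := mul_le_mul_of_nonneg_left hL6 (by linarith : (0:ℝ) ≤ 6 * (c - 1))
      have h8 : 6 * (c - 1) * (1 / 6) = c - 1 := by ring
      linarith
    have hfin : a * (x - 1) ≤ a * x := by
      have h9 : a * x - a * (x - 1) = a := by ring
      linarith
    have e3 : 6 * (c - 1) * L = 6 * (c * L) - 6 * L := by ring
    have hEδ : 0 ≤ (1 / (2 * δ)) * E := by positivity
    rw [habs]
    linarith [hax, hcEe, hc6, hfin, e1, e2, e3, hEδ, hL0]

/-- if `(r_n)` is a sequence of measurable maps with
`sup_n sup_{s∈[0,T]} ‖r_n(s)‖_H < ∞`, then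
`sup_{(f,g) ∈ S̄^Υ} sup_n [ ∫₀^T ‖∫_Z γ(s,r_n(s),z)(g(s,z) − 1) ν(dz)‖_H ds
  + ∫₀^T ‖B(s,r_n(s))f(s)‖_H ds ] < ∞`. -/
theorem statement7 {V H Z : Type*}
    [NormedAddCommGroup V] [NormedSpace ℝ V] [MeasurableSpace V] [BorelSpace V]
    [NormedAddCommGroup H] [InnerProductSpace ℝ H] [CompleteSpace H]
    [TopologicalSpace Z] [PolishSpace Z] [LocallyCompactSpace Z]
    [MeasurableSpace Z] [BorelSpace Z]
    -- the continuous dense embedding `V ⊂ H`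
    (i : V →L[ℝ] H) (hi_inj : Function.Injective i) (hi_dense : DenseRange i)
    (T : ℝ) (hT : 0 < T)
    (ν : Measure Z) [IsFiniteMeasureOnCompacts ν]
    (b : ℝ → ℝ) (hb0 : ∀ t, 0 ≤ b t) (hb : IntegrableOn b (Set.Icc 0 T))
    (B : ℝ → V → (H →L[ℝ] H))
    (hB_meas : StronglyMeasurable (Function.uncurry B))
    -- operator-norm bound on `B` (implied by (H.5))
    (hB : ∀ᵐ t ∂(volume.restrict (Set.Icc (0:ℝ) T)), ∀ x : V,
      ‖B t x‖ ≤ Real.sqrt (b t * (1 + ‖i x‖ ^ 2)))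
    (γ : ℝ → V → Z → H)
    (hγ_meas : StronglyMeasurable (fun q : ℝ × V × Z => γ q.1 q.2.1 q.2.2))
    (Lγ : ℝ × Z → ℝ)
    (hLγ_L2 : ∫⁻ q, ENNReal.ofReal (Lγ q ^ 2) ∂(nuT T ν) < ∞)
    (hLγ_H2 : memHp (nuT T ν) 2 Lγ)
    -- growth bound on `γ` (hypothesis (H.8))
    (hγ : ∀ᵐ t ∂(volume.restrict (Set.Icc (0:ℝ) T)), ∀ (x : V) (z : Z),
      ‖γ t x z‖ ≤ Lγ (t, z) * (1 + ‖i x‖))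
    (Υ : ℝ) (hΥ : 0 < Υ)
    -- the sequence of maps, uniformly bounded in `H`
    (r : ℕ → ℝ → V) (hr_meas : ∀ n, Measurable (r n))
    (hr_bdd : ∃ M : ℝ, ∀ n, ∀ s ∈ Set.Icc (0:ℝ) T, ‖i (r n s)‖ ≤ M) :
    ∃ C : ℝ, ∀ (f : ℝ → H) (g : ℝ × Z → ℝ),
      MemLp f 2 (volume.restrict (Set.Icc (0:ℝ) T)) →
      (1 / 2) * (∫ s in Set.Icc (0:ℝ) T, ‖f s‖ ^ 2) ≤ Υ →
      g ∈ entS (nuT T ν) Υ →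
      ∀ n : ℕ,
        (∫ s in Set.Icc (0:ℝ) T, ‖∫ z, (g (s, z) - 1) • γ s (r n s) z ∂ν‖)
          + (∫ s in Set.Icc (0:ℝ) T, ‖(B s (r n s)) (f s)‖) ≤ C := by
  classical
  obtain ⟨M, hM⟩ := hr_bdd
  have hM0 : 0 ≤ M := le_trans (norm_nonneg _) (hM 0 0 ⟨le_refl 0, hT.le⟩)
  obtain ⟨hLmeas, hLnn, δ, hδ, hHp⟩ := hLγ_H2
  set μ := volume.restrict (Set.Icc (0:ℝ) T) with hμdef
  set c₁ : ℝ := 1 / (2 * δ) + Real.exp (1 / (4 * δ)) with hc₁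
  set c₂ : ℝ := 6 * Real.exp (1 / (4 * δ)) + 3 with hc₂
  have hc₁0 : 0 ≤ c₁ := by rw [hc₁]; positivity
  have hc₂0 : 0 ≤ c₂ := by rw [hc₂]; positivity
  -- finiteness of the exponential moment
  set K₁ : ℝ≥0∞ := ∫⁻ q, ENNReal.ofReal (Real.exp (δ * Lγ q ^ 2) - 1) ∂(nuT T ν) with hK₁def
  have hK₁ : K₁ < ⊤ := by
    set E : Set (ℝ × Z) := {q | 1 ≤ Lγ q} with hEdef
    have hEmeas : MeasurableSet E := measurableSet_le measurable_const hLmeas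
    have hEfin : (nuT T ν) E < ⊤ := by
      have h1 : (nuT T ν) E = ∫⁻ _ in E, 1 ∂(nuT T ν) := (setLIntegral_one E).symm
      rw [h1]
      calc ∫⁻ _ in E, 1 ∂(nuT T ν)
          ≤ ∫⁻ q in E, ENNReal.ofReal (Lγ q ^ 2) ∂(nuT T ν) := by
            refine setLIntegral_mono ((hLmeas.pow_const 2).ennreal_ofReal) ?_
            intro q hq
            have hq1 : (1:ℝ) ≤ Lγ q := hq
            have h2 : (1:ℝ) ≤ Lγ q ^ 2 := by nlinarith
            calc (1:ℝ≥0∞) = ENNReal.ofReal 1 := by simp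
              _ ≤ _ := ENNReal.ofReal_le_ofReal h2
        _ ≤ ∫⁻ q, ENNReal.ofReal (Lγ q ^ 2) ∂(nuT T ν) := setLIntegral_le_lintegral E _
        _ < ⊤ := hLγ_L2
    have hHpE := hHp E hEmeas hEfin
    rw [show ((2:ℝ)) = ((2:ℕ):ℝ) by norm_num] at hHpE
    simp_rw [Real.rpow_natCast] at hHpE
    have hpt : ∀ q, ENNReal.ofReal (Real.exp (δ * Lγ q ^ 2) - 1)
        ≤ E.indicator (fun q => ENNReal.ofReal (Real.exp (δ * Lγ q ^ 2))) q
          + ENNReal.ofReal (δ * Real.exp δ * Lγ q ^ 2) := by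
      intro q
      by_cases hqE : q ∈ E
      · rw [Set.indicator_of_mem hqE]
        exact le_add_right (ENNReal.ofReal_le_ofReal (by linarith))
      · rw [Set.indicator_of_notMem hqE, zero_add]
        have ha : 0 ≤ Lγ q := hLnn q
        have ha1 : Lγ q < 1 := not_le.1 hqE
        apply ENNReal.ofReal_le_ofReal
        have hsq1 : Lγ q ^ 2 ≤ 1 := by nlinarith
        have h1 : δ * Lγ q ^ 2 ≤ δ := mul_le_of_le_one_right hδ.le hsq1
        have h2 := exp_sub_one_le (δ * Lγ q ^ 2) (by positivity)
        have h3 : Real.exp (δ * Lγ q ^ 2) ≤ Real.exp δ := Real.exp_le_exp.2 h1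
        nlinarith [mul_nonneg hδ.le (sq_nonneg (Lγ q))]
    calc K₁ ≤ ∫⁻ q, (E.indicator (fun q => ENNReal.ofReal (Real.exp (δ * Lγ q ^ 2))) q
          + ENNReal.ofReal (δ * Real.exp δ * Lγ q ^ 2)) ∂(nuT T ν) := lintegral_mono hpt
      _ = (∫⁻ q in E, ENNReal.ofReal (Real.exp (δ * Lγ q ^ 2)) ∂(nuT T ν))
          + ∫⁻ q, ENNReal.ofReal (δ * Real.exp δ * Lγ q ^ 2) ∂(nuT T ν) := by
          rw [lintegral_add_left ((Measurable.indicator (((hLmeas.pow_const 2).const_mul δ).exp.ennreal_ofReal) hEmeas)),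
            lintegral_indicator hEmeas _]
      _ < ⊤ := by
          refine ENNReal.add_lt_top.2 ⟨hHpE, ?_⟩
          have hsplit : ∀ q : ℝ × Z, ENNReal.ofReal (δ * Real.exp δ * Lγ q ^ 2)
              = ENNReal.ofReal (δ * Real.exp δ) * ENNReal.ofReal (Lγ q ^ 2) := fun q =>
            ENNReal.ofReal_mul (by positivity)
          simp_rw [hsplit]
          rw [lintegral_const_mul' _ _ ENNReal.ofReal_ne_top]
          exact ENNReal.mul_lt_top ENNReal.ofReal_lt_top hLγ_L2
  -- the b-integral
  set Ib : ℝ≥0∞ := ∫⁻ s, ENNReal.ofReal (b s) ∂μ with hIbdef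
  have hIb : Ib < ⊤ := hb.lintegral_lt_top
  -- the final constants
  set A₁ : ℝ≥0∞ := ENNReal.ofReal (1 + M)
      * (ENNReal.ofReal c₁ * K₁ + ENNReal.ofReal c₂ * ENNReal.ofReal Υ) with hA₁def
  set A₂ : ℝ≥0∞ := ENNReal.ofReal ((1 + M ^ 2) / 2) * Ib + ENNReal.ofReal Υ with hA₂def
  have hA₁top : A₁ ≠ ⊤ := by
    rw [hA₁def]
    exact ENNReal.mul_ne_top ENNReal.ofReal_ne_top
      (ENNReal.add_ne_top.2 ⟨ENNReal.mul_ne_top ENNReal.ofReal_ne_top hK₁.ne,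
        ENNReal.mul_ne_top ENNReal.ofReal_ne_top ENNReal.ofReal_ne_top⟩)
  have hA₂top : A₂ ≠ ⊤ := by
    rw [hA₂def]
    exact ENNReal.add_ne_top.2 ⟨ENNReal.mul_ne_top ENNReal.ofReal_ne_top hIb.ne,
      ENNReal.ofReal_ne_top⟩
  refine ⟨A₁.toReal + A₂.toReal, ?_⟩
  intro f g hf hfΥ hg n
  obtain ⟨hgmeas, hg0, hgent⟩ := hg
  -- PART 1 : the jump term
  have hpart1 : (∫ s in Set.Icc (0:ℝ) T, ‖∫ z, (g (s, z) - 1) • γ s (r n s) z ∂ν‖)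
      ≤ A₁.toReal := by
    set Φ : ℝ × Z → H := fun p => (g p - 1) • γ p.1 (r n p.1) p.2 with hΦdef
    have hγc : StronglyMeasurable (fun p : ℝ × Z => γ p.1 (r n p.1) p.2) :=
      hγ_meas.comp_measurable (measurable_fst.prodMk
        (((hr_meas n).comp measurable_fst).prodMk measurable_snd))
    have hΦ : StronglyMeasurable Φ :=
      ((hgmeas.sub measurable_const).stronglyMeasurable).smul hγc
    have hinner : StronglyMeasurable (fun s : ℝ => ∫ z, Φ (s, z) ∂ν) :=
      hΦ.integral_prod_right'
    have heq : (∫ s in Set.Icc (0:ℝ) T, ‖∫ z, (g (s, z) - 1) • γ s (r n s) z ∂ν‖)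
        = (∫⁻ s, ENNReal.ofReal ‖∫ z, Φ (s, z) ∂ν‖ ∂μ).toReal := by
      exact integral_eq_lintegral_of_nonneg_ae (ae_of_all _ fun s => norm_nonneg _)
        hinner.norm.aestronglyMeasurable
    rw [heq]
    refine ENNReal.toReal_mono hA₁top ?_
    -- the bounding function
    set F : ℝ × Z → ℝ≥0∞ := fun q => ENNReal.ofReal (1 + M)
        * (ENNReal.ofReal (c₁ * (Real.exp (δ * Lγ q ^ 2) - 1))
          + ENNReal.ofReal (c₂ * (g q * Real.log (g q) - g q + 1))) with hFdef
    have hFmeas : Measurable F := by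
      apply Measurable.const_mul
      apply Measurable.fun_add
      · exact ((((hLmeas.pow_const 2).const_mul δ).exp.sub measurable_const).const_mul
          c₁).ennreal_ofReal
      · exact (((hgmeas.mul (Real.measurable_log.comp hgmeas)).sub hgmeas).add_const
          1).const_mul c₂ |>.ennreal_ofReal
    have hstep1 : (∫⁻ s, ENNReal.ofReal ‖∫ z, Φ (s, z) ∂ν‖ ∂μ)
        ≤ ∫⁻ s, ∫⁻ z, F (s, z) ∂ν ∂μ := by
      have hae : ∀ᵐ s ∂μ, s ∈ Set.Icc (0:ℝ) T ∧ ∀ (x : V) (z : Z),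
          ‖γ s x z‖ ≤ Lγ (s, z) * (1 + ‖i x‖) :=
        ((ae_restrict_mem measurableSet_Icc).and hγ)
      refine lintegral_mono_ae (hae.mono ?_)
      rintro s ⟨hsIcc, hγs⟩
      calc ENNReal.ofReal ‖∫ z, Φ (s, z) ∂ν‖
          = ‖∫ z, Φ (s, z) ∂ν‖₊ := ofReal_norm _
        _ ≤ ∫⁻ z, ‖Φ (s, z)‖₊ ∂ν := enorm_integral_le_lintegral_enorm _
        _ ≤ ∫⁻ z, F (s, z) ∂ν := by
            refine lintegral_mono fun z => ?_
            have hnorm : (‖Φ (s, z)‖₊ : ℝ≥0∞) = ENNReal.ofReal ‖Φ (s, z)‖ :=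
              (ofReal_norm _).symm
            rw [hnorm]
            have hre : ‖Φ (s, z)‖ = |g (s, z) - 1| * ‖γ s (r n s) z‖ := by
              rw [hΦdef]; simp [norm_smul, Real.norm_eq_abs]
            have hb1 : ‖γ s (r n s) z‖ ≤ Lγ (s, z) * (1 + M) := by
              refine le_trans (hγs (r n s) z) ?_
              exact mul_le_mul_of_nonneg_left (by linarith [hM n s hsIcc]) (hLnn _)
            have hb2 : |g (s, z) - 1| * ‖γ s (r n s) z‖
                ≤ (1 + M) * (Lγ (s, z) * |g (s, z) - 1|) := by
              have h5 := mul_le_mul_of_nonneg_left hb1 (abs_nonneg (g (s, z) - 1))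
              have e5 : |g (s, z) - 1| * (Lγ (s, z) * (1 + M))
                  = (1 + M) * (Lγ (s, z) * |g (s, z) - 1|) := by ring
              linarith
            have hkey : Lγ (s, z) * |g (s, z) - 1|
                ≤ c₁ * (Real.exp (δ * Lγ (s, z) ^ 2) - 1)
                  + c₂ * (g (s, z) * Real.log (g (s, z)) - g (s, z) + 1) := by
              rw [hc₁, hc₂]
              exact key_ineq δ (Lγ (s, z)) (g (s, z)) hδ (hLnn _) (hg0 _)
            have hb3 : ‖Φ (s, z)‖ ≤ (1 + M) * (c₁ * (Real.exp (δ * Lγ (s, z) ^ 2) - 1)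
                + c₂ * (g (s, z) * Real.log (g (s, z)) - g (s, z) + 1)) := by
              rw [hre]
              refine le_trans hb2 (mul_le_mul_of_nonneg_left hkey (by linarith))
            calc ENNReal.ofReal ‖Φ (s, z)‖
                ≤ ENNReal.ofReal ((1 + M) * (c₁ * (Real.exp (δ * Lγ (s, z) ^ 2) - 1)
                  + c₂ * (g (s, z) * Real.log (g (s, z)) - g (s, z) + 1))) :=
                ENNReal.ofReal_le_ofReal hb3
              _ = ENNReal.ofReal (1 + M) * ENNReal.ofReal
                  (c₁ * (Real.exp (δ * Lγ (s, z) ^ 2) - 1)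
                    + c₂ * (g (s, z) * Real.log (g (s, z)) - g (s, z) + 1)) :=
                ENNReal.ofReal_mul (by linarith)
              _ ≤ F (s, z) := by
                rw [hFdef]
                exact mul_le_mul_right (ENNReal.ofReal_add_le) _
    refine le_trans hstep1 ?_
    have hTon : ∫⁻ s, ∫⁻ z, F (s, z) ∂ν ∂μ = ∫⁻ q, F q ∂(nuT T ν) :=
      (lintegral_prod F hFmeas.aemeasurable).symm
    rw [hTon]
    -- evaluate the integral of F
    have hsplit : ∫⁻ q, F q ∂(nuT T ν) = ENNReal.ofReal (1 + M)
        * ((∫⁻ q, ENNReal.ofReal (c₁ * (Real.exp (δ * Lγ q ^ 2) - 1)) ∂(nuT T ν))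
          + ∫⁻ q, ENNReal.ofReal (c₂ * (g q * Real.log (g q) - g q + 1)) ∂(nuT T ν)) := by
      rw [hFdef]
      rw [lintegral_const_mul' _ _ ENNReal.ofReal_ne_top]
      congr 1
      exact lintegral_add_left
        (((((hLmeas.pow_const 2).const_mul δ).exp.sub measurable_const).const_mul
          c₁).ennreal_ofReal) _
    rw [hsplit, hA₁def]
    refine mul_le_mul_right (add_le_add ?_ ?_) _
    · have h7 : ∀ q : ℝ × Z, ENNReal.ofReal (c₁ * (Real.exp (δ * Lγ q ^ 2) - 1))
          = ENNReal.ofReal c₁ * ENNReal.ofReal (Real.exp (δ * Lγ q ^ 2) - 1) := fun q =>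
        ENNReal.ofReal_mul hc₁0
      simp_rw [h7]
      rw [lintegral_const_mul' _ _ ENNReal.ofReal_ne_top]
    · have h8 : ∀ q : ℝ × Z, ENNReal.ofReal (c₂ * (g q * Real.log (g q) - g q + 1))
          = ENNReal.ofReal c₂ * ENNReal.ofReal (g q * Real.log (g q) - g q + 1) := fun q =>
        ENNReal.ofReal_mul hc₂0
      simp_rw [h8]
      rw [lintegral_const_mul' _ _ ENNReal.ofReal_ne_top]
      exact mul_le_mul_right hgent _
  -- PART 2 : the B term
  have hpart2 : (∫ s in Set.Icc (0:ℝ) T, ‖(B s (r n s)) (f s)‖) ≤ A₂.toReal := by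
    set ψ : ℝ → (H →L[ℝ] H) := fun s => B s (r n s) with hψdef
    have hψ : StronglyMeasurable ψ :=
      hB_meas.comp_measurable (measurable_id.prodMk (hr_meas n))
    have hfs : AEStronglyMeasurable (fun s => ψ s (f s)) μ :=
      (isBoundedBilinearMap_apply.continuous).comp_aestronglyMeasurable
        (hψ.aestronglyMeasurable.prodMk hf.1)
    have heq : (∫ s in Set.Icc (0:ℝ) T, ‖(B s (r n s)) (f s)‖)
        = (∫⁻ s, ENNReal.ofReal ‖ψ s (f s)‖ ∂μ).toReal :=
      integral_eq_lintegral_of_nonneg_ae (ae_of_all _ fun s => norm_nonneg _)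
        hfs.norm
    rw [heq]
    refine ENNReal.toReal_mono hA₂top ?_
    have hsq : Integrable (fun s => ‖f s‖ ^ 2) μ := by
      have h := hf.integrable_norm_rpow (by norm_num) (by norm_num)
      simpa [ENNReal.toReal_ofNat, Real.rpow_two] using h
    have hstep : ∀ᵐ s ∂μ, ENNReal.ofReal ‖ψ s (f s)‖
        ≤ ENNReal.ofReal ((1 + M ^ 2) / 2 * b s) + ENNReal.ofReal (1 / 2 * ‖f s‖ ^ 2) := by
      have hae : ∀ᵐ s ∂μ, s ∈ Set.Icc (0:ℝ) T ∧ ∀ x : V,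
          ‖B s x‖ ≤ Real.sqrt (b s * (1 + ‖i x‖ ^ 2)) :=
        ((ae_restrict_mem measurableSet_Icc).and hB)
      refine hae.mono ?_
      rintro s ⟨hsIcc, hBs⟩
      refine le_trans (ENNReal.ofReal_le_ofReal ?_) ENNReal.ofReal_add_le
      have h1 : ‖ψ s (f s)‖ ≤ ‖ψ s‖ * ‖f s‖ := (ψ s).le_opNorm (f s)
      have h2 : ‖ψ s‖ ≤ Real.sqrt (b s * (1 + M ^ 2)) := by
        refine le_trans (hBs (r n s)) (Real.sqrt_le_sqrt ?_)
        have h3 := hM n s hsIcc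
        have h4 : ‖i (r n s)‖ ^ 2 ≤ M ^ 2 := by nlinarith [norm_nonneg (i (r n s))]
        nlinarith [hb0 s]
      have h5 : Real.sqrt (b s * (1 + M ^ 2)) * ‖f s‖
          ≤ (b s * (1 + M ^ 2) + ‖f s‖ ^ 2) / 2 := by
        have h6 := Real.sq_sqrt (mul_nonneg (hb0 s) (by positivity) : (0:ℝ) ≤ b s * (1 + M ^ 2))
        nlinarith [sq_nonneg (Real.sqrt (b s * (1 + M ^ 2)) - ‖f s‖),
          Real.sqrt_nonneg (b s * (1 + M ^ 2)), norm_nonneg (f s)]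
      have h7 : ‖ψ s‖ * ‖f s‖ ≤ Real.sqrt (b s * (1 + M ^ 2)) * ‖f s‖ :=
        mul_le_mul_of_nonneg_right h2 (norm_nonneg _)
      calc ‖ψ s (f s)‖ ≤ (b s * (1 + M ^ 2) + ‖f s‖ ^ 2) / 2 := by linarith
        _ = (1 + M ^ 2) / 2 * b s + 1 / 2 * ‖f s‖ ^ 2 := by ring
    calc (∫⁻ s, ENNReal.ofReal ‖ψ s (f s)‖ ∂μ)
        ≤ ∫⁻ s, (ENNReal.ofReal ((1 + M ^ 2) / 2 * b s)
          + ENNReal.ofReal (1 / 2 * ‖f s‖ ^ 2)) ∂μ := lintegral_mono_ae hstep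
      _ = (∫⁻ s, ENNReal.ofReal ((1 + M ^ 2) / 2 * b s) ∂μ)
          + ∫⁻ s, ENNReal.ofReal (1 / 2 * ‖f s‖ ^ 2) ∂μ :=
        lintegral_add_left' ((hb.aestronglyMeasurable.aemeasurable.const_mul
          ((1 + M ^ 2) / 2)).ennreal_ofReal) _
      _ ≤ A₂ := by
        rw [hA₂def]
        refine add_le_add ?_ ?_
        · have h9 : ∀ s : ℝ, ENNReal.ofReal ((1 + M ^ 2) / 2 * b s)
              = ENNReal.ofReal ((1 + M ^ 2) / 2) * ENNReal.ofReal (b s) := fun s =>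
            ENNReal.ofReal_mul (by positivity)
          simp_rw [h9]
          rw [lintegral_const_mul' _ _ ENNReal.ofReal_ne_top]
        · have h10 : ∀ s : ℝ, ENNReal.ofReal (1 / 2 * ‖f s‖ ^ 2)
              = ENNReal.ofReal (1 / 2) * ENNReal.ofReal (‖f s‖ ^ 2) := fun s =>
            ENNReal.ofReal_mul (by norm_num)
          simp_rw [h10]
          rw [lintegral_const_mul' _ _ ENNReal.ofReal_ne_top]
          have h11 : (∫⁻ s, ENNReal.ofReal (‖f s‖ ^ 2) ∂μ)
              = ENNReal.ofReal (∫ s, ‖f s‖ ^ 2 ∂μ) :=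
            (ofReal_integral_eq_lintegral_ofReal hsq
              (ae_of_all _ fun s => sq_nonneg _)).symm
          rw [h11]
          have h12 : (∫ s, ‖f s‖ ^ 2 ∂μ) ≤ 2 * Υ := by
            have := hfΥ
            linarith
          calc ENNReal.ofReal (1 / 2) * ENNReal.ofReal (∫ s, ‖f s‖ ^ 2 ∂μ)
              ≤ ENNReal.ofReal (1 / 2) * ENNReal.ofReal (2 * Υ) :=
              mul_le_mul_right (ENNReal.ofReal_le_ofReal h12) _
            _ = ENNReal.ofReal (1 / 2 * (2 * Υ)) := (ENNReal.ofReal_mul (by norm_num)).symm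
            _ = ENNReal.ofReal Υ := by congr 1; ring
  linarith [hpart1, hpart2]
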